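/- Let m ≥ 0 and let P ⊂ [0,1)² be a 2^{-m}-separated set (with respect to dist_H) of cardinality 2^{2m+1}. Then for every dyadic rectangle R ⊆ [0,1)² with |R| ≥ 2^{-2m-1}, the number of points of P in R equals 2^{2m+1}·|R|. -/

import Mathlib

open MeasureTheory
open scoped ENNReal

/-- A dyadic interval `[k·2^n, (k+1)·2^n)`. -/
def IsDyadicInterval (I : Set ℝ) : Prop :=
  ∃ k n : ℤ, I = Set.Ico ((k : ℝ) * 2 ^ n) (((k : ℝ) + 1) * 2 ^ n)

/-- An axis-parallel dyadic rectangle in the plane. -/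
def IsDyadicRect (R : Set (ℝ × ℝ)) : Prop :=
  ∃ I J : Set ℝ, IsDyadicInterval I ∧ IsDyadicInterval J ∧ R = I ×ˢ J

/-- `dist_H(p,q) = inf { |R|^{1/2} : R dyadic rectangle containing p and q }`. -/
noncomputable def distH (p q : ℝ × ℝ) : ℝ≥0∞ :=
  sInf {v | ∃ R : Set (ℝ × ℝ), IsDyadicRect R ∧ p ∈ R ∧ q ∈ R ∧ v = volume R ^ (1 / 2 : ℝ)}

def unitSq : Set (ℝ × ℝ) := Set.Ico (0 : ℝ) 1 ×ˢ Set.Ico (0 : ℝ) 1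

lemma enn_ofReal_zpow (n : ℤ) : ENNReal.ofReal ((2:ℝ) ^ n) = (2:ℝ≥0∞) ^ n := by
  rw [← Real.rpow_intCast 2 n, ← ENNReal.ofReal_rpow_of_pos two_pos, ENNReal.rpow_intCast]
  norm_num

lemma floor_mem_iff (n : ℕ) (k : ℤ) (x : ℝ) :
    x ∈ Set.Ico ((k:ℝ) * 2 ^ (-(n:ℤ))) (((k:ℝ)+1) * 2 ^ (-(n:ℤ))) ↔ ⌊x * 2 ^ n⌋ = k := by
  have h2 : (0:ℝ) < 2 ^ n := by positivity
  have e1 : (k:ℝ) * (2^n)⁻¹ ≤ x ↔ (k:ℝ) ≤ x * 2^n := by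
    rw [← div_eq_mul_inv, div_le_iff₀ h2]
  have e2 : x < ((k:ℝ)+1) * (2^n)⁻¹ ↔ x * 2^n < (k:ℝ)+1 := by
    rw [← div_eq_mul_inv, lt_div_iff₀ h2]
  rw [Int.floor_eq_iff, zpow_neg, zpow_natCast, Set.mem_Ico, e1, e2]

lemma dyadic_norm {I : Set ℝ} (hI : IsDyadicInterval I) (hsub : I ⊆ Set.Ico (0:ℝ) 1) :
    ∃ (n : ℕ) (k : ℤ), 0 ≤ k ∧ k < 2 ^ n ∧
      I = Set.Ico ((k:ℝ) * 2 ^ (-(n:ℤ))) (((k:ℝ)+1) * 2 ^ (-(n:ℤ))) := by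
  obtain ⟨k, s, rfl⟩ := hI
  have h2 : (0:ℝ) < 2 ^ s := by positivity
  have hlt : (k:ℝ) * 2 ^ s < ((k:ℝ)+1) * 2 ^ s := by nlinarith
  obtain ⟨h0, h1⟩ := (Set.Ico_subset_Ico_iff hlt).mp hsub
  have hs1 : (2:ℝ) ^ s ≤ 1 := by nlinarith
  have hs0 : s ≤ 0 := by
    by_contra h
    push_neg at h
    have : (2:ℝ) ^ (0:ℤ) < 2 ^ s := zpow_lt_zpow_right₀ one_lt_two h
    rw [zpow_zero] at this; linarith
  have hns : (-((-s).toNat : ℤ)) = s := by omega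
  refine ⟨(-s).toNat, k, ?_, ?_, by rw [hns]⟩
  · by_contra h
    push_neg at h
    have : (k:ℝ) < 0 := by exact_mod_cast h
    nlinarith
  · have hr : ((k:ℝ) + 1) ≤ 2 ^ ((-s):ℤ) := by
      rw [zpow_neg, ← one_div, le_div_iff₀ h2]
      exact h1
    have : ((k:ℝ) + 1) ≤ ((2:ℤ) ^ ((-s).toNat) : ℤ) := by
      push_cast
      rw [← zpow_natCast (2:ℝ), hns] at *
      convert hr using 2
      omega
    have : k + 1 ≤ (2:ℤ) ^ ((-s).toNat) := by exact_mod_cast this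
    omega

lemma vol_tile (a b : ℕ) (i j : ℤ) :
    volume (Set.Ico ((i:ℝ) * 2 ^ (-(a:ℤ))) (((i:ℝ)+1) * 2 ^ (-(a:ℤ))) ×ˢ
      Set.Ico ((j:ℝ) * 2 ^ (-(b:ℤ))) (((j:ℝ)+1) * 2 ^ (-(b:ℤ))))
      = (2:ℝ≥0∞) ^ (-(a:ℤ) + -(b:ℤ)) := by
  rw [MeasureTheory.Measure.volume_eq_prod, MeasureTheory.Measure.prod_prod,
    Real.volume_Ico, Real.volume_Ico,
    show ((i:ℝ)+1) * 2 ^ (-(a:ℤ)) - (i:ℝ) * 2 ^ (-(a:ℤ)) = 2 ^ (-(a:ℤ)) by ring,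
    show ((j:ℝ)+1) * 2 ^ (-(b:ℤ)) - (j:ℝ) * 2 ^ (-(b:ℤ)) = 2 ^ (-(b:ℤ)) by ring,
    enn_ofReal_zpow, enn_ofReal_zpow, ENNReal.zpow_add two_ne_zero ENNReal.ofNat_ne_top]

lemma sep_two_eq (m : ℕ) {p q : ℝ × ℝ}
    (hsep : ENNReal.ofReal ((2 : ℝ) ^ (-(m : ℤ))) ≤ distH p q)
    {T : Set (ℝ × ℝ)} (hT : IsDyadicRect T)
    (hvolT : volume T ≤ (2:ℝ≥0∞) ^ (-(2*(m:ℤ)) - 1))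
    (hp : p ∈ T) (hq : q ∈ T) : p = q := by
  by_contra hne
  have h1 : distH p q ≤ volume T ^ (1/2 : ℝ) :=
    sInf_le ⟨T, hT, hp, hq, rfl⟩
  have h2 : volume T ^ (1/2 : ℝ) ≤ ((2:ℝ≥0∞) ^ (-(2*(m:ℤ)) - 1)) ^ (1/2 : ℝ) :=
    ENNReal.rpow_le_rpow hvolT (by norm_num)
  have h3 : ((2:ℝ≥0∞) ^ (-(2*(m:ℤ)) - 1)) ^ (1/2 : ℝ)
      = (2:ℝ≥0∞) ^ (((-(2*(m:ℤ)) - 1 : ℤ) : ℝ) * (1/2 : ℝ)) := by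
    rw [ENNReal.rpow_mul, ENNReal.rpow_intCast]
  have h4 : (2:ℝ≥0∞) ^ (((-(2*(m:ℤ)) - 1 : ℤ) : ℝ) * (1/2 : ℝ))
      < (2:ℝ≥0∞) ^ ((-(m:ℤ) : ℤ) : ℝ) := by
    apply ENNReal.rpow_lt_rpow_of_exponent_lt ENNReal.one_lt_two ENNReal.ofNat_ne_top
    push_cast
    linarith [Nat.cast_nonneg (α := ℝ) m]
  have h5 : ENNReal.ofReal ((2 : ℝ) ^ (-(m : ℤ))) = (2:ℝ≥0∞) ^ ((-(m:ℤ) : ℤ) : ℝ) := by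
    rw [enn_ofReal_zpow, ENNReal.rpow_intCast]
  rw [h5] at hsep
  have h6 := hsep.trans (h1.trans (h2.trans_eq h3))
  exact absurd (h6.trans_lt h4) (lt_irrefl _)

lemma dyadic_nonempty {I : Set ℝ} (hI : IsDyadicInterval I) : I.Nonempty := by
  obtain ⟨k, s, rfl⟩ := hI
  have h2 : (0:ℝ) < 2 ^ s := by positivity
  exact ⟨(k:ℝ) * 2 ^ s, Set.mem_Ico.mpr ⟨le_refl _, by nlinarith⟩⟩

/-- If `P ⊆ [0,1)²` is `2^{-m}`-separated with `#P = 2^{2m+1}`, then every dyadic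
rectangle `R ⊆ [0,1)²` with `|R| ≥ 2^{-2m-1}` contains exactly `2^{2m+1}·|R|`
points of `P`. -/
theorem stmt5 (m : ℕ) (P : Finset (ℝ × ℝ))
    (hPsub : (↑P : Set (ℝ × ℝ)) ⊆ unitSq)
    (hcard : P.card = 2 ^ (2 * m + 1))
    (hsep : ∀ p ∈ P, ∀ q ∈ P, p ≠ q → ENNReal.ofReal ((2 : ℝ) ^ (-(m : ℤ))) ≤ distH p q)
    (R : Set (ℝ × ℝ)) (hR : IsDyadicRect R) (hRsub : R ⊆ unitSq)
    (hvol : (2 : ℝ≥0∞) ^ (-(2 * (m : ℤ)) - 1) ≤ volume R) :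
    (((↑P : Set (ℝ × ℝ)) ∩ R).ncard : ℝ) = 2 ^ (2 * m + 1) * (volume R).toReal := by
  classical
  obtain ⟨I, J, hIdy, hJdy, rfl⟩ := hR
  obtain ⟨x0, hx0⟩ := dyadic_nonempty hIdy
  obtain ⟨y0, hy0⟩ := dyadic_nonempty hJdy
  have hIsub : I ⊆ Set.Ico (0:ℝ) 1 := fun x hx => (hRsub (Set.mk_mem_prod hx hy0)).1
  have hJsub : J ⊆ Set.Ico (0:ℝ) 1 := fun y hy => (hRsub (Set.mk_mem_prod hx0 hy)).2
  obtain ⟨u, k, hk0, hk1, rfl⟩ := dyadic_norm hIdy hIsub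
  obtain ⟨v, l, hl0, hl1, rfl⟩ := dyadic_norm hJdy hJsub
  -- volume of R
  have volR := vol_tile u v k l
  -- u + v ≤ 2m+1
  have huv : u + v ≤ 2 * m + 1 := by
    by_contra h
    push_neg at h
    have h1 : volume (Set.Ico ((k:ℝ) * 2 ^ (-(u:ℤ))) (((k:ℝ)+1) * 2 ^ (-(u:ℤ))) ×ˢ
        Set.Ico ((l:ℝ) * 2 ^ (-(v:ℤ))) (((l:ℝ)+1) * 2 ^ (-(v:ℤ))))
        = (2:ℝ≥0∞) ^ ((-(u:ℤ) + -(v:ℤ) : ℤ) : ℝ) := by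
      rw [ENNReal.rpow_intCast]; exact volR
    have h2 : (2:ℝ≥0∞) ^ ((-(u:ℤ) + -(v:ℤ) : ℤ) : ℝ)
        < (2:ℝ≥0∞) ^ ((-(2*(m:ℤ)) - 1 : ℤ) : ℝ) := by
      apply ENNReal.rpow_lt_rpow_of_exponent_lt ENNReal.one_lt_two ENNReal.ofNat_ne_top
      have h' : (2:ℝ) * m + 1 < (u:ℝ) + v := by exact_mod_cast h
      push_cast
      linarith
    have h3 : (2:ℝ≥0∞) ^ ((-(2*(m:ℤ)) - 1 : ℤ) : ℝ) = (2:ℝ≥0∞) ^ (-(2*(m:ℤ)) - 1 : ℤ) :=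
      ENNReal.rpow_intCast _ _
    rw [h1] at hvol
    rw [← h3] at hvol
    exact absurd (lt_of_le_of_lt hvol h2) (lt_irrefl _)
  set b : ℕ := 2 * m + 1 - u with hbdef
  have hub : u + b = 2 * m + 1 := by omega
  have hvb : v ≤ b := by omega
  set c : ℕ := b - v with hcdef
  have hvc : v + c = b := by omega
  -- the tiling map
  set F : ℝ × ℝ → ℤ × ℤ := fun p => (⌊p.1 * 2 ^ u⌋, ⌊p.2 * 2 ^ b⌋) with hF
  have mem_tile : ∀ (p : ℝ × ℝ) (i j : ℤ),
      p ∈ (Set.Ico ((i:ℝ) * 2 ^ (-(u:ℤ))) (((i:ℝ)+1) * 2 ^ (-(u:ℤ))) ×ˢ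
        Set.Ico ((j:ℝ) * 2 ^ (-(b:ℤ))) (((j:ℝ)+1) * 2 ^ (-(b:ℤ)))) ↔ F p = (i, j) := by
    intro p i j
    rw [Set.mem_prod, floor_mem_iff, floor_mem_iff, hF, Prod.ext_iff]
  have tile_dyadic : ∀ i j : ℤ,
      IsDyadicRect (Set.Ico ((i:ℝ) * 2 ^ (-(u:ℤ))) (((i:ℝ)+1) * 2 ^ (-(u:ℤ))) ×ˢ
        Set.Ico ((j:ℝ) * 2 ^ (-(b:ℤ))) (((j:ℝ)+1) * 2 ^ (-(b:ℤ)))) :=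
    fun i j => ⟨_, _, ⟨i, -(u:ℤ), rfl⟩, ⟨j, -(b:ℤ), rfl⟩, rfl⟩
  have tile_vol : ∀ i j : ℤ,
      volume (Set.Ico ((i:ℝ) * 2 ^ (-(u:ℤ))) (((i:ℝ)+1) * 2 ^ (-(u:ℤ))) ×ˢ
        Set.Ico ((j:ℝ) * 2 ^ (-(b:ℤ))) (((j:ℝ)+1) * 2 ^ (-(b:ℤ))))
        = (2:ℝ≥0∞) ^ (-(2*(m:ℤ)) - 1) := by
    intro i j
    rw [vol_tile]
    congr 1
    omega
  -- injectivity on P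
  have hinj : Set.InjOn F ↑P := by
    intro p hp q hq hFeq
    by_contra hne
    exact hne (sep_two_eq m (hsep p hp q hq hne) (tile_dyadic (F p).1 (F p).2)
      (tile_vol (F p).1 (F p).2).le
      ((mem_tile p (F p).1 (F p).2).mpr rfl)
      ((mem_tile q (F p).1 (F p).2).mpr (by rw [← hFeq])))
  -- F maps P onto S₀
  set S₀ : Finset (ℤ × ℤ) := Finset.Ico (0:ℤ) (2^u) ×ˢ Finset.Ico (0:ℤ) (2^b) with hS₀
  have hmapS₀ : ∀ p ∈ P, F p ∈ S₀ := by
    intro p hp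
    obtain ⟨⟨hp1l, hp1r⟩, ⟨hp2l, hp2r⟩⟩ := hPsub hp
    rw [hS₀, Finset.mem_product, Finset.mem_Ico, Finset.mem_Ico]
    have h2u : (0:ℝ) < 2 ^ u := by positivity
    have h2b : (0:ℝ) < 2 ^ b := by positivity
    refine ⟨⟨Int.le_floor.mpr (by push_cast; positivity), Int.floor_lt.mpr ?_⟩,
      ⟨Int.le_floor.mpr (by push_cast; positivity), Int.floor_lt.mpr ?_⟩⟩
    · push_cast; nlinarith
    · push_cast; nlinarith
  have hcardS₀ : S₀.card = 2 ^ (2 * m + 1) := by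
    rw [hS₀, Finset.card_product, Int.card_Ico, Int.card_Ico]
    have e1 : ((2:ℤ)^u - 0) = ((2^u : ℕ) : ℤ) := by push_cast; ring
    have e2 : ((2:ℤ)^b - 0) = ((2^b : ℕ) : ℤ) := by push_cast; ring
    rw [e1, e2, Int.toNat_natCast, Int.toNat_natCast, ← pow_add, hub]
  have himage : P.image F = S₀ := by
    apply Finset.eq_of_subset_of_card_le
    · intro x hx
      obtain ⟨p, hp, rfl⟩ := Finset.mem_image.mp hx
      exact hmapS₀ p hp
    · rw [hcardS₀, Finset.card_image_of_injOn hinj, hcard]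
  -- the index set of R
  set S₁ : Finset (ℤ × ℤ) := {k} ×ˢ Finset.Ico (l * 2^c) ((l+1) * 2^c) with hS₁
  have hS₁S₀ : S₁ ⊆ S₀ := by
    intro x hx
    rw [hS₁, Finset.mem_product, Finset.mem_singleton, Finset.mem_Ico] at hx
    obtain ⟨hx1, hx2l, hx2r⟩ := hx
    rw [hS₀, Finset.mem_product, Finset.mem_Ico, Finset.mem_Ico]
    have h2c : (0:ℤ) < 2 ^ c := by positivity
    refine ⟨⟨by omega, by omega⟩, ?_, ?_⟩
    · nlinarith
    · have : (l+1) * 2^c ≤ 2^v * 2^c := by nlinarith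
      have h2 : (2:ℤ)^v * 2^c = 2^b := by rw [← pow_add, hvc]
      omega
  -- membership in R via F
  have memR_iff : ∀ p : ℝ × ℝ,
      p ∈ (Set.Ico ((k:ℝ) * 2 ^ (-(u:ℤ))) (((k:ℝ)+1) * 2 ^ (-(u:ℤ))) ×ˢ
        Set.Ico ((l:ℝ) * 2 ^ (-(v:ℤ))) (((l:ℝ)+1) * 2 ^ (-(v:ℤ)))) ↔ F p ∈ S₁ := by
    intro p
    rw [Set.mem_prod, floor_mem_iff, hS₁, Finset.mem_product, Finset.mem_singleton,
      Finset.mem_Ico]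
    have key : p.2 ∈ Set.Ico ((l:ℝ) * 2 ^ (-(v:ℤ))) (((l:ℝ)+1) * 2 ^ (-(v:ℤ))) ↔
        (l * 2^c ≤ ⌊p.2 * 2 ^ b⌋ ∧ ⌊p.2 * 2 ^ b⌋ < (l+1) * 2^c) := by
      rw [floor_mem_iff, Int.floor_eq_iff]
      have h2c : (0:ℝ) < 2 ^ c := by positivity
      have hbb : (2:ℝ) ^ b = 2 ^ v * 2 ^ c := by rw [← pow_add, hvc]
      constructor
      · rintro ⟨h1, h2⟩
        constructor
        · rw [Int.le_floor]
          push_cast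
          rw [hbb, ← mul_assoc]
          nlinarith
        · rw [Int.floor_lt]
          push_cast
          rw [hbb, ← mul_assoc]
          nlinarith
      · rintro ⟨h1, h2⟩
        rw [Int.le_floor] at h1
        rw [Int.floor_lt] at h2
        push_cast at h1 h2
        rw [hbb, ← mul_assoc] at h1 h2
        constructor
        · nlinarith
        · nlinarith
    rw [key]
  -- the filtered set
  set T : Finset (ℝ × ℝ) := P.filter (fun p => F p ∈ S₁) with hT
  have hsetT : (↑P : Set (ℝ × ℝ)) ∩
      (Set.Ico ((k:ℝ) * 2 ^ (-(u:ℤ))) (((k:ℝ)+1) * 2 ^ (-(u:ℤ))) ×ˢ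
        Set.Ico ((l:ℝ) * 2 ^ (-(v:ℤ))) (((l:ℝ)+1) * 2 ^ (-(v:ℤ)))) = ↑T := by
    ext p
    rw [Set.mem_inter_iff, memR_iff p]
    simp [hT]
  have hTimage : T.image F = S₁ := by
    apply Finset.Subset.antisymm
    · intro x hx
      obtain ⟨p, hp, rfl⟩ := Finset.mem_image.mp hx
      exact (Finset.mem_filter.mp hp).2
    · intro x hx
      have hx0 : x ∈ P.image F := himage ▸ hS₁S₀ hx
      obtain ⟨p, hp, rfl⟩ := Finset.mem_image.mp hx0
      exact Finset.mem_image.mpr ⟨p, Finset.mem_filter.mpr ⟨hp, hx⟩, rfl⟩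
  have hTcard : T.card = 2 ^ c := by
    have hinj' : Set.InjOn F ↑T := hinj.mono (by rw [hT]; exact_mod_cast Finset.filter_subset _ _)
    rw [← Finset.card_image_of_injOn hinj', hTimage, hS₁, Finset.card_product,
      Finset.card_singleton, Int.card_Ico, one_mul]
    have e : ((l+1) * 2^c - l * 2^c) = ((2^c : ℕ) : ℤ) := by push_cast; ring
    rw [e, Int.toNat_natCast]
  -- conclude
  rw [hsetT, Set.ncard_coe_finset, hTcard, volR]
  have htoReal : ((2:ℝ≥0∞) ^ (-(u:ℤ) + -(v:ℤ))).toReal = (2:ℝ) ^ (-(u:ℤ) + -(v:ℤ)) := by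
    rw [← enn_ofReal_zpow, ENNReal.toReal_ofReal (by positivity)]
  rw [htoReal]
  have hpow : (2:ℝ) ^ (2 * m + 1) = 2 ^ u * 2 ^ v * 2 ^ c := by
    rw [← pow_add, ← pow_add]
    congr 1
    omega
  rw [hpow, zpow_add₀ (two_ne_zero) , zpow_neg, zpow_neg, zpow_natCast, zpow_natCast]
  push_cast
  field_simp
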